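/- Let p and q be positive integers and let χ : S¹ × S¹ → S¹ be the group homomorphism χ(z, w) = z^p * w^{-q}, where S¹ is the circle group of unit complex numbers. Then the kernel of χ has exactly gcd(p, q) connected components. -/

import Mathlib

open Complex

lemma circleExp_pow (t : ℝ) (n : ℕ) : Circle.exp t ^ n = Circle.exp (n * t) := by
  induction n with
  | zero => simp
  | succ n ih =>
      rw [pow_succ, ih, ← Circle.exp_add]
      congr 1
      push_cast
      ring

lemma circle_pow_surj {n : ℕ} (hn : 0 < n) (x : Circle) : ∃ y : Circle, y ^ n = x := by
  refine ⟨Circle.exp (Complex.arg x / n), ?_⟩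
  rw [circleExp_pow, mul_div_cancel₀ _ (by exact_mod_cast hn.ne' : (n:ℝ) ≠ 0), Circle.exp_arg]

lemma circle_coe_pow (x : Circle) (n : ℕ) : ((x ^ n : Circle) : ℂ) = (x : ℂ) ^ n := by
  induction n with
  | zero => simp
  | succ n ih => rw [pow_succ, pow_succ, Circle.coe_mul, ih]

noncomputable def mu_equiv (d : ℕ) (hd : 0 < d) :
    {x : Circle // x ^ d = 1} ≃ (Polynomial.nthRootsFinset d (1 : ℂ)) := by
  refine ⟨fun x => ⟨(x.1 : ℂ), (Polynomial.mem_nthRootsFinset hd (1 : ℂ)).2 ?_⟩,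
    fun z => ⟨⟨z.1, ?_⟩, ?_⟩, fun x => ?_, fun z => ?_⟩
  · rw [← circle_coe_pow, x.2, Circle.coe_one]
  · have hz : (z.1 : ℂ) ^ d = 1 := (Polynomial.mem_nthRootsFinset hd (1 : ℂ)).1 z.2
    have habs : ‖(z.1 : ℂ)‖ ^ d = 1 := by
      rw [← norm_pow, hz, norm_one]
    have h1 : ‖(z.1 : ℂ)‖ = 1 := by
      rcases lt_trichotomy ‖(z.1 : ℂ)‖ 1 with h | h | h
      · exact absurd habs (by
          have := pow_lt_one₀ (norm_nonneg _) h hd.ne'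
          linarith)
      · exact h
      · exact absurd habs (by
          have := one_lt_pow₀ h hd.ne'
          linarith)
    exact mem_sphere_zero_iff_norm.2 h1
  · apply Subtype.ext
    exact (circle_coe_pow _ d).trans (((Polynomial.mem_nthRootsFinset hd (1 : ℂ)).1 z.2).trans Circle.coe_one.symm)
  · rfl
  · rfl

lemma card_mu (d : ℕ) (hd : 0 < d) : Nat.card {x : Circle // x ^ d = 1} = d := by
  rw [Nat.card_congr (mu_equiv d hd), Nat.card_eq_finsetCard]
  exact (Complex.isPrimitiveRoot_exp d hd.ne').card_nthRootsFinset

lemma pow_param {G : Type*} [CommGroup G] {P Q A B : ℤ} (hbez : P * A + Q * B = 1)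
    (u v : G) (huv : v ^ P = u ^ Q) :
    (u ^ A * v ^ B) ^ P = u ∧ (u ^ A * v ^ B) ^ Q = v := by
  constructor
  · calc (u ^ A * v ^ B) ^ P = (u ^ A) ^ P * (v ^ P) ^ B := by
          rw [mul_zpow, ← zpow_mul, ← zpow_mul, mul_comm B P, zpow_mul v]
      _ = u ^ (A * P) * u ^ (Q * B) := by rw [huv, ← zpow_mul, ← zpow_mul]
      _ = u ^ (P * A + Q * B) := by rw [← zpow_add, mul_comm A P]
      _ = u := by rw [hbez, zpow_one]
  · calc (u ^ A * v ^ B) ^ Q = (u ^ Q) ^ A * (v ^ B) ^ Q := by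
          rw [mul_zpow, ← zpow_mul, ← zpow_mul, mul_comm A Q, zpow_mul u]
      _ = v ^ (P * A) * v ^ (B * Q) := by rw [← huv, ← zpow_mul, ← zpow_mul]
      _ = v ^ (P * A + Q * B) := by rw [← zpow_add, mul_comm B Q]
      _ = v := by rw [hbez, zpow_one]

lemma zpow_mul_zpow_pow {G : Type*} [CommGroup G] (z w : G) (a b : ℤ) (n : ℕ) :
    (z ^ a * w ^ b) ^ n = z ^ (a * n) * w ^ (b * n) := by
  rw [← zpow_natCast (z ^ a * w ^ b), mul_zpow, ← zpow_mul, ← zpow_mul]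

theorem stmt_16 (p q : ℕ) (hp : 0 < p) (hq : 0 < q) :
    Nat.card (ConnectedComponents
      {zw : Circle × Circle // zw.1 ^ p * zw.2 ^ (-(q : ℤ)) = 1}) = Nat.gcd p q := by
  set d := Nat.gcd p q with hdd
  have hd : 0 < d := Nat.gcd_pos_of_pos_left q hp
  set p' := p / d with hp'd
  set q' := q / d with hq'd
  have hpd : d * p' = p := Nat.mul_div_cancel' (Nat.gcd_dvd_left p q)
  have hqd : d * q' = q := Nat.mul_div_cancel' (Nat.gcd_dvd_right p q)
  have hp' : 0 < p' := by
    rcases Nat.eq_zero_or_pos p' with h | h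
    · rw [h, mul_zero] at hpd; omega
    · exact h
  have hP : (p : ℤ) = (d : ℤ) * (p' : ℤ) := by exact_mod_cast hpd.symm
  have hQ : (q : ℤ) = (d : ℤ) * (q' : ℤ) := by exact_mod_cast hqd.symm
  have hcop : Nat.Coprime p' q' := Nat.coprime_div_gcd_div_gcd hd
  obtain ⟨A, B, hbez⟩ : ∃ A B : ℤ, (p' : ℤ) * A + (q' : ℤ) * B = 1 := by
    refine ⟨Int.gcdA p' q', Int.gcdB p' q', ?_⟩
    have h1 : Int.gcd (p' : ℤ) (q' : ℤ) = 1 := by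
      rw [Int.gcd_natCast_natCast]; exact hcop
    have h2 := Int.gcd_eq_gcd_ab (p' : ℤ) (q' : ℤ)
    rw [h1] at h2
    exact_mod_cast h2.symm
  set K := {zw : Circle × Circle // zw.1 ^ p * zw.2 ^ (-(q : ℤ)) = 1} with hK
  set μ := {x : Circle // x ^ d = 1} with hμ
  haveI : Finite μ := Finite.of_equiv _ (mu_equiv d hd).symm
  have fmem : ∀ x : K, (x.1.1 ^ (p' : ℤ) * x.1.2 ^ (-(q' : ℤ))) ^ d = 1 := by
    intro x
    rw [zpow_mul_zpow_pow]
    have e1 : (p' : ℤ) * (d : ℤ) = (p : ℤ) := by rw [hP]; ring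
    have e2 : (-(q' : ℤ)) * (d : ℤ) = -(q : ℤ) := by rw [hQ]; ring
    rw [e1, e2, zpow_natCast]
    exact x.2
  set f : K → μ := fun x => ⟨x.1.1 ^ (p' : ℤ) * x.1.2 ^ (-(q' : ℤ)), fmem x⟩ with hf
  have hfc : Continuous f := by
    apply Continuous.subtype_mk
    exact ((continuous_zpow _).comp (continuous_fst.comp continuous_subtype_val)).mul
      ((continuous_zpow _).comp (continuous_snd.comp continuous_subtype_val))
  -- key connectivity fact
  have key : ∀ ω₀ : Circle, ω₀ ^ ((p : ℕ) : ℤ) = 1 → ∀ x y : K,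
      (f x).1 = ω₀ ^ (p' : ℤ) → (f y).1 = ω₀ ^ (p' : ℤ) →
      connectedComponent x = connectedComponent y := by
    intro ω₀ hω x y hx hy
    have cmem : ∀ t : Circle,
        (t ^ (q' : ℤ) * ω₀) ^ p * (t ^ (p' : ℤ)) ^ (-(q : ℤ)) = 1 := by
      intro t
      have h1 : (t ^ (q' : ℤ) * ω₀) ^ p = t ^ ((q' : ℤ) * p) * ω₀ ^ ((1 : ℤ) * p) := by
        rw [← zpow_one ω₀, zpow_mul_zpow_pow, zpow_one]
      have h2 : (t ^ (p' : ℤ)) ^ (-(q : ℤ)) = t ^ ((p' : ℤ) * (-(q : ℤ))) := by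
        rw [← zpow_mul]
      have e3 : (q' : ℤ) * p + (p' : ℤ) * (-(q : ℤ)) = 0 := by rw [hP, hQ]; ring
      rw [h1, h2, one_mul, hω, mul_one, ← zpow_add, e3, zpow_zero]
    set C : Circle → K := fun t => ⟨(t ^ (q' : ℤ) * ω₀, t ^ (p' : ℤ)), cmem t⟩ with hC
    have hCc : Continuous C := by
      apply Continuous.subtype_mk
      exact Continuous.prodMk ((continuous_zpow _).mul continuous_const) (continuous_zpow _)
    have hconn : IsConnected (Set.range C) := by
      have hes : Function.Surjective Circle.exp := fun x => ⟨Complex.arg x, Circle.exp_arg x⟩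
      rw [← hes.range_comp C]
      exact isConnected_range (hCc.comp Circle.exp.continuous)
    have hmem : ∀ z : K, (f z).1 = ω₀ ^ (p' : ℤ) → z ∈ Set.range C := by
      intro z hz
      have hz' : z.1.1 ^ (p' : ℤ) * z.1.2 ^ (-(q' : ℤ)) = ω₀ ^ (p' : ℤ) := hz
      have hx1 : z.1.1 ^ (p' : ℤ) = ω₀ ^ (p' : ℤ) * z.1.2 ^ (q' : ℤ) := by
        have h3 := congrArg (· * z.1.2 ^ (q' : ℤ)) hz'
        simpa [mul_assoc, ← zpow_add] using h3
      have huv : (z.1.1 * ω₀⁻¹) ^ (p' : ℤ) = z.1.2 ^ (q' : ℤ) := by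
        rw [mul_zpow, inv_zpow', zpow_neg, hx1, mul_comm (ω₀ ^ (p' : ℤ)) _, mul_assoc,
          mul_inv_cancel, mul_one]
      obtain ⟨h1, h2⟩ := pow_param hbez (z.1.2) (z.1.1 * ω₀⁻¹) huv
      refine ⟨z.1.2 ^ A * (z.1.1 * ω₀⁻¹) ^ B, ?_⟩
      apply Subtype.ext
      apply Prod.ext
      · show (z.1.2 ^ A * (z.1.1 * ω₀⁻¹) ^ B) ^ (q' : ℤ) * ω₀ = z.1.1
        rw [h2, inv_mul_cancel_right]
      · show (z.1.2 ^ A * (z.1.1 * ω₀⁻¹) ^ B) ^ (p' : ℤ) = z.1.2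
        rw [h1]
    have hsub := hconn.isPreconnected.subset_connectedComponent (hmem x hx)
    exact connectedComponent_eq (hsub (hmem y hy))
  have hFb : Function.Bijective hfc.connectedComponentsLift := by
    constructor
    · intro a b hab
      obtain ⟨x, rfl⟩ := ConnectedComponents.surjective_coe a
      obtain ⟨y, rfl⟩ := ConnectedComponents.surjective_coe b
      rw [hfc.connectedComponentsLift_apply_coe, hfc.connectedComponentsLift_apply_coe] at hab
      rw [ConnectedComponents.coe_eq_coe]
      obtain ⟨ω₀, hω₀⟩ := circle_pow_surj hp' (f x).1
      have hω₀' : ω₀ ^ (p' : ℤ) = (f x).1 := by rw [zpow_natCast]; exact hω₀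
      have hωp : ω₀ ^ ((p : ℕ) : ℤ) = 1 := by
        rw [hP, mul_comm, zpow_mul, hω₀', zpow_natCast]
        exact (f x).2
      exact key ω₀ hωp x y hω₀'.symm (by rw [← hab, ← hω₀'])
    · intro ω
      obtain ⟨ω₀, hω₀⟩ := circle_pow_surj hp' ω.1
      have hx : ((ω₀, 1) : Circle × Circle).1 ^ p *
          ((ω₀, 1) : Circle × Circle).2 ^ (-(q : ℤ)) = 1 := by
        show ω₀ ^ p * (1 : Circle) ^ (-(q : ℤ)) = 1
        rw [one_zpow, mul_one, ← hpd, mul_comm, pow_mul, hω₀]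
        exact ω.2
      refine ⟨(⟨(ω₀, 1), hx⟩ : K), ?_⟩
      rw [hfc.connectedComponentsLift_apply_coe]
      apply Subtype.ext
      show ω₀ ^ (p' : ℤ) * (1 : Circle) ^ (-(q' : ℤ)) = ω.1
      rw [one_zpow, mul_one, zpow_natCast]
      exact hω₀
  rw [Nat.card_congr (Equiv.ofBijective _ hFb), card_mu d hd]
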